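/- For any point g ∈ R^p and any nonempty closed convex cone C ⊆ R^p with polar C*, the supremum of ⟨g, z⟩ over z ∈ C ∩ B(0,1) (the intersection of C with the closed unit ball) equals dist(g, C*) = inf_{u∈C*} ||g − u||. -/

import Mathlib

open MeasureTheory Real

/-- The polar cone `C* = {x : ⟨x, z⟩ ≤ 0 for all z ∈ C}`. -/
def polarCone {p : ℕ} (C : Set (EuclideanSpace ℝ (Fin p))) :
    Set (EuclideanSpace ℝ (Fin p)) :=
  {x | ∀ z ∈ C, (inner ℝ x z : ℝ) ≤ 0}

/-- For any `g ∈ ℝ^p` and any nonempty closed convex cone `C ⊆ ℝ^p`,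
`sup { ⟨g, z⟩ : z ∈ C ∩ B(0,1) } = dist(g, C*)`, where `B(0,1)` is the closed unit
ball and `C*` is the polar cone. -/
theorem sup_inner_cone_ball_eq_dist_polar {p : ℕ}
    (C : Set (EuclideanSpace ℝ (Fin p)))
    (hne : C.Nonempty) (hconv : Convex ℝ C) (hclosed : IsClosed C)
    (hcone : ∀ (t : ℝ), 0 ≤ t → ∀ x ∈ C, t • x ∈ C)
    (g : EuclideanSpace ℝ (Fin p)) :
    sSup ((fun z => (inner ℝ g z : ℝ)) '' (C ∩ Metric.closedBall 0 1)) =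
      Metric.infDist g (polarCone C) := by
  -- 0 ∈ C
  obtain ⟨x₀, hx₀⟩ := hne
  have h0C : (0 : EuclideanSpace ℝ (Fin p)) ∈ C := by
    have := hcone 0 le_rfl x₀ hx₀
    simpa using this
  -- projection v of g onto C
  obtain ⟨v, hvC, hv⟩ := exists_norm_eq_iInf_of_complete_convex ⟨x₀, hx₀⟩
    (hclosed.isComplete) hconv g
  have hchar : ∀ w ∈ C, (inner ℝ (g - v) (w - v) : ℝ) ≤ 0 :=
    (norm_eq_iInf_iff_real_inner_le_zero hconv hvC).mp hv
  -- ⟪g - v, v⟫ = 0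
  have horth : (inner ℝ (g - v) v : ℝ) = 0 := by
    have h1 : (inner ℝ (g - v) ((0 : EuclideanSpace ℝ (Fin p)) - v) : ℝ) ≤ 0 :=
      hchar 0 h0C
    have h2 : (inner ℝ (g - v) ((2 : ℝ) • v - v) : ℝ) ≤ 0 :=
      hchar ((2 : ℝ) • v) (hcone 2 (by norm_num) v hvC)
    have e1 : (inner ℝ (g - v) ((0 : EuclideanSpace ℝ (Fin p)) - v) : ℝ)
        = -(inner ℝ (g - v) v : ℝ) := by
      rw [zero_sub, inner_neg_right]
    have e2 : ((2 : ℝ) • v - v) = v := by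
      rw [two_smul]; abel
    rw [e1] at h1
    rw [e2] at h2
    linarith
  -- u := g - v ∈ polarCone C
  have hupolar : g - v ∈ polarCone C := by
    intro z hz
    have := hchar z hz
    rw [inner_sub_right, horth] at this
    linarith
  -- inner ℝ g v = ‖v‖^2
  have hgv : (inner ℝ g v : ℝ) = ‖v‖ ^ 2 := by
    have : (inner ℝ (g - v) v : ℝ) = inner ℝ g v - inner ℝ v v := by
      rw [inner_sub_left]
    rw [this] at horth
    rw [real_inner_self_eq_norm_sq] at horth
    linarith
  -- dist(g, polar) = ‖v‖
  have hdist : Metric.infDist g (polarCone C) = ‖v‖ := by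
    apply le_antisymm
    · have := Metric.infDist_le_dist_of_mem (x := g) hupolar
      rwa [dist_eq_norm, sub_sub_cancel] at this
    · by_contra hlt
      push_neg at hlt
      obtain ⟨u', hu', hdlt⟩ :=
        (Metric.infDist_lt_iff ⟨g - v, hupolar⟩).mp hlt
      rw [dist_eq_norm] at hdlt
      refine absurd hdlt (not_lt.mpr ?_)
      rcases eq_or_ne v 0 with hv0 | hv0
      · simp [hv0]
      · have hvpos : (0 : ℝ) < ‖v‖ := norm_pos_iff.mpr hv0
        have h1 : ‖v‖ ^ 2 ≤ (inner ℝ (g - u') v : ℝ) := by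
          rw [inner_sub_left, hgv]
          have : (inner ℝ u' v : ℝ) ≤ 0 := hu' v hvC
          linarith
        have h2 : (inner ℝ (g - u') v : ℝ) ≤ ‖g - u'‖ * ‖v‖ :=
          real_inner_le_norm _ _
        have : ‖v‖ * ‖v‖ ≤ ‖g - u'‖ * ‖v‖ := by nlinarith
        exact le_of_mul_le_mul_right this hvpos
  rw [hdist]
  -- the sup equals ‖v‖
  have hmem : ‖v‖ ∈ (fun z => (inner ℝ g z : ℝ)) '' (C ∩ Metric.closedBall 0 1) := by
    rcases eq_or_ne v 0 with hv0 | hv0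
    · refine ⟨0, ⟨h0C, by simp⟩, ?_⟩
      simp [hv0]
    · have hvpos : (0 : ℝ) < ‖v‖ := norm_pos_iff.mpr hv0
      refine ⟨‖v‖⁻¹ • v, ⟨hcone _ (by positivity) v hvC, ?_⟩, ?_⟩
      · simp [Metric.mem_closedBall, dist_eq_norm, norm_smul, abs_of_nonneg,
          hvpos.le, inv_mul_cancel₀ hvpos.ne']
      · simp only [real_inner_smul_right, hgv]
        field_simp
  have hub : ∀ y ∈ (fun z => (inner ℝ g z : ℝ)) '' (C ∩ Metric.closedBall 0 1),
      y ≤ ‖v‖ := by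
    rintro y ⟨z, ⟨hzC, hzball⟩, rfl⟩
    have hz1 : ‖z‖ ≤ 1 := by
      simpa [dist_eq_norm] using (Metric.mem_closedBall.mp hzball)
    have hsplit : (inner ℝ g z : ℝ) = inner ℝ v z + inner ℝ (g - v) z := by
      rw [← inner_add_left]; congr 1; abel
    have h1 : (inner ℝ (g - v) z : ℝ) ≤ 0 := hupolar z hzC
    have h2 : (inner ℝ v z : ℝ) ≤ ‖v‖ * ‖z‖ := real_inner_le_norm _ _
    have h3 : ‖v‖ * ‖z‖ ≤ ‖v‖ := by
      nlinarith [norm_nonneg v]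
    simp only [hsplit]
    linarith
  exact le_antisymm (csSup_le ⟨_, hmem⟩ hub) (le_csSup ⟨‖v‖, hub⟩ hmem)
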